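/- Let α > 0 and λ ∈ ℝ with λ ≥ 1. The Gauss equation in codimension 1 with curvature components R_{1212} = −α² − (1/4)(λ − 1/λ)(3λ + 1/λ), R_{1313} = −α² + (1/4)(λ − 1/λ)(λ + 3/λ), R_{2323} = −α² + (1/4)(λ − 1/λ)², R_{1213} = α(λ − 1/λ), R_{1223} = R_{1323} = 0 (these are the curvature components of the solvable Lie algebra r'_{3,α} with its Milnor-type orthonormal frame with parameter λ) has a solution if and only if √((1 + 2α² + 2√(1 + α² + α⁴))/3) < λ < α + √(1 + α²). -/

import Mathlib

/-- A solution of the Gauss equation in codimension 1 exists for the given curvature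
components. (The family `h i j` is encoded by the six entries `h11, h12, h13, h22,
h23, h33`, symmetry `h i j = h j i` being automatic.) -/
def GaussSolvable (R1212 R1313 R2323 R1213 R1223 R1323 : ℝ) : Prop :=
  ∃ h11 h12 h13 h22 h23 h33 : ℝ,
    h11 * h22 - h12 ^ 2 = R1212 ∧
    h11 * h33 - h13 ^ 2 = R1313 ∧
    h22 * h33 - h23 ^ 2 = R2323 ∧
    h11 * h23 - h13 * h12 = R1213 ∧
    h12 * h23 - h13 * h22 = R1223 ∧
    h12 * h33 - h13 * h23 = R1323

/-- Construction of a solution when the "determinant" is positive. -/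
theorem gauss_construct (R1 R2 R3 R4 : ℝ) (h : 0 < R3 * (R1 * R2 - R4 ^ 2)) :
    GaussSolvable R1 R2 R3 R4 0 0 := by
  have ht0 : 0 < Real.sqrt (R3 * (R1 * R2 - R4 ^ 2)) := Real.sqrt_pos.mpr h
  have ht2 : Real.sqrt (R3 * (R1 * R2 - R4 ^ 2)) ^ 2 = R3 * (R1 * R2 - R4 ^ 2) :=
    Real.sq_sqrt h.le
  have htne : Real.sqrt (R3 * (R1 * R2 - R4 ^ 2)) ≠ 0 := ne_of_gt ht0
  refine ⟨(R1 * R2 - R4 ^ 2) / Real.sqrt (R3 * (R1 * R2 - R4 ^ 2)), 0, 0,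
    R3 * R1 / Real.sqrt (R3 * (R1 * R2 - R4 ^ 2)),
    R3 * R4 / Real.sqrt (R3 * (R1 * R2 - R4 ^ 2)),
    R3 * R2 / Real.sqrt (R3 * (R1 * R2 - R4 ^ 2)), ?_, ?_, ?_, ?_, ?_, ?_⟩
  · generalize Real.sqrt (R3 * (R1 * R2 - R4 ^ 2)) = t at *
    field_simp
    rw [ht2]
    ring
  · generalize Real.sqrt (R3 * (R1 * R2 - R4 ^ 2)) = t at *
    field_simp
    rw [ht2]
    ring
  · generalize Real.sqrt (R3 * (R1 * R2 - R4 ^ 2)) = t at *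
    field_simp
    rw [ht2]
    ring
  · generalize Real.sqrt (R3 * (R1 * R2 - R4 ^ 2)) = t at *
    field_simp
    rw [ht2]
    ring
  · ring
  · ring

/-- Necessary conditions from a solution. -/
theorem gauss_necessary (R1 R2 R3 R4 : ℝ) (h : GaussSolvable R1 R2 R3 R4 0 0) :
    0 < R3 * (R1 * R2 - R4 ^ 2) ∨
      (R1 * R2 - R4 ^ 2 = 0 ∧ R3 * R1 = 0 ∧ R3 * R4 = 0) := by
  obtain ⟨h11, h12, h13, h22, h23, h33, e1, e2, e3, e4, e5, e6⟩ := h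
  subst e1; subst e2; subst e3; subst e4
  set ed := h11 * h22 * h33 + 2 * (h12 * h13 * h23) - h11 * h23 ^ 2 - h22 * h13 ^ 2
    - h33 * h12 ^ 2 with hed_def
  rcases eq_or_ne ed 0 with hed | hed
  · right
    refine ⟨?_, ?_, ?_⟩
    · linear_combination h11 * hed
    · linear_combination h22 * hed + (h12 * h23 - h13 * h22) * e5
    · linear_combination h23 * hed + (h12 * h33 - h13 * h23) * e5
  · left
    have F1 : (h22 * h33 - h23 ^ 2) *
        ((h11 * h22 - h12 ^ 2) * (h11 * h33 - h13 ^ 2) - (h11 * h23 - h13 * h12) ^ 2)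
        = ed ^ 2 := by
      linear_combination ((h11 * h33 - h13 ^ 2) * (h12 * h23 - h13 * h22)
          - (h11 * h23 - h13 * h12) * (h12 * h33 - h13 * h23)) * e5
        + ((h11 * h22 - h12 ^ 2) * (h12 * h33 - h13 * h23)
          - (h11 * h23 - h13 * h12) * (h12 * h23 - h13 * h22)) * e6
    rw [F1]
    positivity


private lemma aux_hD16 (a l : ℝ) (hlne : l ≠ 0) :
    16*l^4*((-a ^ 2 - (1/4) * (l - 1/l) * (3*l + 1/l)) * (-a ^ 2 + (1/4) * (l - 1/l) * (l + 3/l))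
        - (a * (l - 1/l))^2) =
      -3*l^8 - (8*a^2+4)*l^6 + (16*a^4+16*a^2+14)*l^4 - (8*a^2+4)*l^2 - 3 := by
  field_simp
  ring

private lemma aux_hP4 (a l : ℝ) (hlne : l ≠ 0) :
    4*l^2*(-a ^ 2 + (1/4) * (l - 1/l) ^ 2) = (l^2 - 1 - 2*a*l)*(l^2 - 1 + 2*a*l) := by
  field_simp
  ring

private lemma aux_hKey (a l q : ℝ) (hq2 : q ^ 2 = 1 + a ^ 2 + a ^ 4) :
    -3*(1+2*a^2+2*q)*(-3*l^8 - (8*a^2+4)*l^6 + (16*a^4+16*a^2+14)*l^4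
        - (8*a^2+4)*l^2 - 3) =
      (3*l^2 - (1+2*a^2+2*q))*((1+2*a^2+2*q)*l^2 - 3)*(3*l^4+(8*q+4*a^2+2)*l^2+3) := by
  linear_combination (-36*l^2 + 40*l^4 + 32*l^4*q - 36*l^6 + 80*a^2*l^4) * hq2

set_option maxHeartbeats 1000000 in
/-- Proposition 4.7 (2): for `α > 0` and `λ ≥ 1`, the metric Lie algebra
`(r'_{3,α}, ⟨·,·⟩_λ)` has a solution of the Gauss equation in codimension 1 if and
only if `√((1 + 2α² + 2√(1+α²+α⁴))/3) < λ < α + √(1+α²)`. -/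
theorem r3_prime_alpha_gauss_solvable_iff (a l : ℝ) (ha : 0 < a) (hl : 1 ≤ l) :
    GaussSolvable (-a ^ 2 - (1/4) * (l - 1/l) * (3*l + 1/l))
        (-a ^ 2 + (1/4) * (l - 1/l) * (l + 3/l))
        (-a ^ 2 + (1/4) * (l - 1/l) ^ 2) (a * (l - 1/l)) 0 0 ↔
      Real.sqrt ((1 + 2 * a ^ 2 + 2 * Real.sqrt (1 + a ^ 2 + a ^ 4)) / 3) < l ∧
        l < a + Real.sqrt (1 + a ^ 2) := by
  have hl0 : (0:ℝ) < l := lt_of_lt_of_le one_pos hl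
  have hlne : l ≠ 0 := ne_of_gt hl0
  set q := Real.sqrt (1 + a ^ 2 + a ^ 4) with hq_def
  have hq0 : 0 ≤ q := Real.sqrt_nonneg _
  have hq2 : q ^ 2 = 1 + a ^ 2 + a ^ 4 := Real.sq_sqrt (by positivity)
  have hq1 : 1 < q := by nlinarith [mul_pos ha ha, sq_nonneg (a ^ 2)]
  set s := Real.sqrt (1 + a ^ 2) with hs_def
  have hs0 : 0 ≤ s := Real.sqrt_nonneg _
  have hs2 : s ^ 2 = 1 + a ^ 2 := Real.sq_sqrt (by positivity)
  have hsa : a < s := by nlinarith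
  have hspos : 0 < s := lt_trans ha hsa
  set R1 := -a ^ 2 - (1/4) * (l - 1/l) * (3*l + 1/l) with hR1
  set R2 := -a ^ 2 + (1/4) * (l - 1/l) * (l + 3/l) with hR2
  set R3 := -a ^ 2 + (1/4) * (l - 1/l) ^ 2 with hR3
  set R4 := a * (l - 1/l) with hR4
  have hl2 : 1 ≤ l ^ 2 := by nlinarith
  have hD16 : 16*l^4*(R1*R2 - R4^2) =
      -3*l^8 - (8*a^2+4)*l^6 + (16*a^4+16*a^2+14)*l^4 - (8*a^2+4)*l^2 - 3 := by
    rw [hR1, hR2, hR4]; exact aux_hD16 a l hlne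
  have hP4 : 4*l^2*R3 = (l^2 - 1 - 2*a*l)*(l^2 - 1 + 2*a*l) := by
    rw [hR3]; exact aux_hP4 a l hlne
  have hKey : -3*(1+2*a^2+2*q)*(-3*l^8 - (8*a^2+4)*l^6 + (16*a^4+16*a^2+14)*l^4
        - (8*a^2+4)*l^2 - 3) =
      (3*l^2 - (1+2*a^2+2*q))*((1+2*a^2+2*q)*l^2 - 3)*(3*l^4+(8*q+4*a^2+2)*l^2+3) :=
    aux_hKey a l q hq2
  have hc3 : 3 < 1+2*a^2+2*q := by nlinarith
  have hcl : 0 < (1+2*a^2+2*q)*l^2 - 3 := by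
    have h1 : (1+2*a^2+2*q) * 1 ≤ (1+2*a^2+2*q) * l^2 :=
      mul_le_mul_of_nonneg_left hl2 (by positivity)
    linarith
  have hquart : 0 < 3*l^4+(8*q+4*a^2+2)*l^2+3 := by positivity
  have l4pos : 0 < l^4 := by positivity
  -- characterization of D < 0
  have dir1 : R1*R2 - R4^2 < 0 → 1 + 2*a^2 + 2*q < 3*l^2 := by
    intro hd
    by_contra hcon
    push_neg at hcon
    have hprod : l^4 * (R1*R2 - R4^2) < 0 := mul_neg_of_pos_of_neg l4pos hd
    have hDp : -3*l^8 - (8*a^2+4)*l^6 + (16*a^4+16*a^2+14)*l^4 - (8*a^2+4)*l^2 - 3 < 0 := by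
      linarith [hD16, hprod]
    have hX : 0 < ((1+2*a^2+2*q)*l^2 - 3)*(3*l^4+(8*q+4*a^2+2)*l^2+3) :=
      mul_pos hcl hquart
    have h1 : 0 < -3*(1+2*a^2+2*q)*(-3*l^8 - (8*a^2+4)*l^6 + (16*a^4+16*a^2+14)*l^4
        - (8*a^2+4)*l^2 - 3) := by
      have := mul_pos (show (0:ℝ) < 3*(1+2*a^2+2*q) by linarith)
        (show (0:ℝ) < -(-3*l^8 - (8*a^2+4)*l^6 + (16*a^4+16*a^2+14)*l^4
          - (8*a^2+4)*l^2 - 3) by linarith)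
      linarith [this]
    have h2 : (3*l^2 - (1+2*a^2+2*q)) * (((1+2*a^2+2*q)*l^2 - 3)*(3*l^4+(8*q+4*a^2+2)*l^2+3)) ≤ 0 :=
      mul_nonpos_of_nonpos_of_nonneg (by linarith) hX.le
    linarith [hKey, h1, h2]
  have dir2 : 1 + 2*a^2 + 2*q < 3*l^2 → R1*R2 - R4^2 < 0 := by
    intro hml
    have hX : 0 < (3*l^2 - (1+2*a^2+2*q))*((1+2*a^2+2*q)*l^2 - 3)*(3*l^4+(8*q+4*a^2+2)*l^2+3) :=
      mul_pos (mul_pos (by linarith) hcl) hquart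
    have hDp : -3*l^8 - (8*a^2+4)*l^6 + (16*a^4+16*a^2+14)*l^4 - (8*a^2+4)*l^2 - 3 < 0 := by
      by_contra h'
      push_neg at h'
      have : (-3*(1+2*a^2+2*q))*(-3*l^8 - (8*a^2+4)*l^6 + (16*a^4+16*a^2+14)*l^4
          - (8*a^2+4)*l^2 - 3) ≤ 0 :=
        mul_nonpos_of_nonpos_of_nonneg (by linarith [hq0, sq_nonneg a]) h'
      linarith [hKey, hX, this]
    by_contra h'
    push_neg at h'
    have : 0 ≤ 16*l^4*(R1*R2 - R4^2) := by
      apply mul_nonneg (by positivity) h'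
    linarith [hD16, this, hDp]
  -- characterization of R3 < 0
  have h2fac : 0 < l^2 - 1 + 2*a*l := by nlinarith [mul_pos ha hl0]
  have dirP1 : R3 < 0 → l < a + s := by
    intro h
    by_contra hc
    push_neg at hc
    have h1 : 0 ≤ l^2 - 1 - 2*a*l := by
      nlinarith [hs2, mul_nonneg (sub_nonneg.mpr hc) (show (0:ℝ) ≤ l - a + s by linarith)]
    have h4 : 0 ≤ 4*l^2*R3 := by
      rw [hP4]; exact mul_nonneg h1 h2fac.le
    nlinarith [mul_pos (mul_pos hl0 hl0) (neg_pos.mpr h)]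
  have dirP2 : l < a + s → R3 < 0 := by
    intro hlt
    have h1 : l^2 - 1 - 2*a*l < 0 := by
      nlinarith [hs2, mul_pos (show (0:ℝ) < a + s - l by linarith)
        (show (0:ℝ) < l - a + s by linarith)]
    have h4 : 4*l^2*R3 < 0 := by
      rw [hP4]; exact mul_neg_of_neg_of_pos h1 h2fac
    nlinarith [mul_pos hl0 hl0]
  -- a + s ≤ l forces the lower bound inequality
  have hm_r : a + s ≤ l → 1 + 2*a^2 + 2*q < 3*l^2 := by
    intro hge
    have hq_le : q ≤ 1 + a^2 := by nlinarith [hq2, hq0, sq_nonneg a]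
    linarith [hs2, hq_le, mul_pos ha hspos, mul_pos ha ha,
      mul_nonneg (sub_nonneg.mpr hge) (show (0:ℝ) ≤ l + (a+s) by positivity)]
  constructor
  · intro hsol
    rcases gauss_necessary _ _ _ _ hsol with hpos | ⟨hD0, hR31, hR34⟩
    · have hP : R3 < 0 := by
        by_contra hc
        push_neg at hc
        have hge : a + s ≤ l := le_of_not_gt (fun hlt => absurd (dirP2 hlt) (not_lt.mpr hc))
        have hD : R1*R2 - R4^2 < 0 := dir2 (hm_r hge)
        have : R3 * (R1*R2 - R4^2) ≤ 0 := mul_nonpos_of_nonneg_of_nonpos hc hD.le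
        linarith
      have hD : R1*R2 - R4^2 < 0 := by
        by_contra hc
        push_neg at hc
        have : R3 * (R1*R2 - R4^2) ≤ 0 := mul_nonpos_of_nonpos_of_nonneg hP.le hc
        linarith
      refine ⟨(Real.sqrt_lt' hl0).mpr ?_, dirP1 hP⟩
      have := dir1 hD
      linarith
    · exfalso
      rcases eq_or_ne R3 0 with h30 | h30
      · have hP40 : (0:ℝ) = (l^2 - 1 - 2*a*l)*(l^2 - 1 + 2*a*l) := by
          rw [← hP4, h30]; ring
        have hquad : l^2 - 2*a*l - 1 = 0 := by
          rcases mul_eq_zero.mp hP40.symm with f | f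
          · linarith
          · linarith
        have hfac : (l - a - s)*(l - a + s) = 0 := by
          linear_combination hquad - hs2
        have hlas : l = a + s := by
          rcases mul_eq_zero.mp hfac with f | f
          · linarith
          · exfalso; have : 0 < l - a + s := by linarith
            linarith
        have hD : R1*R2 - R4^2 < 0 := dir2 (hm_r (le_of_eq hlas.symm))
        linarith
      · have hR1z : R1 = 0 := by
          rcases mul_eq_zero.mp hR31 with f | f
          · exact absurd f h30
          · exact f
        have hR4z : R4 = 0 := by
          rcases mul_eq_zero.mp hR34 with f | f
          · exact absurd f h30
          · exact f
        rw [hR4] at hR4z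
        have hll : l - 1/l = 0 := by
          rcases mul_eq_zero.mp hR4z with f | f
          · exact absurd f (ne_of_gt ha)
          · exact f
        rw [hR1, hll] at hR1z
        linarith [mul_pos ha ha, hR1z]
  · rintro ⟨hlow, hup⟩
    have hml : 1 + 2*a^2 + 2*q < 3*l^2 := by
      have := (Real.sqrt_lt' hl0).mp hlow
      linarith
    exact gauss_construct _ _ _ _ (mul_pos_of_neg_of_neg (dirP2 hup) (dir2 hml))
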